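/- For probability distributions p, q₁, ..., q_N on a finite set χ, it holds that N·(1 - (Σ_x (p(x)·∏_{k=1}^N q_k(x))^{1/(N+1)})^{N+1}) ≥ Σ_{k=1}^N (1 - (Σ_x √(p(x)q_k(x)))²). -/

import Mathlib

open Finset

/-- Key lemma: the geometric-mean overlap raised to the `N+1` power is bounded by
each single squared Bhattacharyya coefficient. -/
lemma geometric_mean_overlap_key
    {χ : Type*} [Fintype χ] (N : ℕ) (p : χ → ℝ) (q : Fin N → χ → ℝ)
    (hp : ∀ x, 0 ≤ p x) (hq : ∀ k x, 0 ≤ q k x) (hq1 : ∀ k, ∑ x, q k x = 1)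
    (j : Fin N) :
    (∑ x, (p x * ∏ k, q k x) ^ ((1 : ℝ) / (N + 1))) ^ ((N : ℝ) + 1)
      ≤ (∑ x, Real.sqrt (p x * q j x)) ^ 2 := by
  have hN1 : (0 : ℝ) < (N : ℝ) + 1 := by positivity
  have hB0 : (0 : ℝ) ≤ ∑ x, Real.sqrt (p x * q j x) :=
    Finset.sum_nonneg fun x _ => Real.sqrt_nonneg _
  set B : ℝ := ∑ x, Real.sqrt (p x * q j x) with hB
  -- main step: G ≤ B ^ (2/(N+1))
  have key : (∑ x, (p x * ∏ k, q k x) ^ ((1 : ℝ) / (N + 1)))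
      ≤ B ^ ((2 : ℝ) / ((N : ℝ) + 1)) := by
    have hNpos : 0 < N := j.pos
    rcases Nat.lt_or_ge N 2 with h1 | h2'
    · -- N = 1
      have hN : N = 1 := by omega
      subst hN
      have hj : j = 0 := Subsingleton.elim _ _
      subst hj
      rw [show ((2 : ℝ) / (((1 : ℕ) : ℝ) + 1)) = 1 by norm_num, Real.rpow_one, hB]
      refine le_of_eq (Finset.sum_congr rfl fun x _ => ?_)
      rw [Fin.prod_univ_one, Real.sqrt_eq_rpow]
      norm_num
    · -- N ≥ 2
      have hN2 : (2 : ℝ) ≤ (N : ℝ) := by exact_mod_cast h2' 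
      have hNm1 : (0 : ℝ) < (N : ℝ) - 1 := by linarith
      set P : ℝ := ((N : ℝ) + 1) / 2 with hP
      set Q : ℝ := ((N : ℝ) + 1) / ((N : ℝ) - 1) with hQ
      have hPQ : P.HolderConjugate Q := by
        rw [Real.holderConjugate_iff_eq_conjExponent (by rw [hP]; linarith)]
        · rw [hP, hQ, eq_div_iff (by intro h; linarith), div_mul_eq_mul_div, div_eq_iff hNm1.ne']; ring
      set f : χ → ℝ := fun x => (p x * q j x) ^ ((1 : ℝ) / (N + 1)) with hf
      set g : χ → ℝ := fun x =>
        (∏ k ∈ univ.erase j, q k x) ^ ((1 : ℝ) / (N + 1)) with hg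
      have hfg : ∀ x, (p x * ∏ k, q k x) ^ ((1 : ℝ) / (N + 1)) = f x * g x := by
        intro x
        have hprod : (∏ k, q k x) = q j x * ∏ k ∈ univ.erase j, q k x :=
          (Finset.mul_prod_erase univ _ (mem_univ j)).symm
        rw [hprod, ← mul_assoc, hf, hg]
        exact Real.mul_rpow (mul_nonneg (hp x) (hq j x))
          (Finset.prod_nonneg fun k _ => hq k x)
      have holder := Real.inner_le_Lp_mul_Lq_of_nonneg univ hPQ
        (f := f) (g := g)
        (fun x _ => Real.rpow_nonneg (mul_nonneg (hp x) (hq j x)) _)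
        (fun x _ => Real.rpow_nonneg (Finset.prod_nonneg fun k _ => hq k x) _)
      have hfP : ∀ x, f x ^ P = Real.sqrt (p x * q j x) := by
        intro x
        show ((p x * q j x) ^ ((1 : ℝ) / ((N : ℝ) + 1))) ^ P = _
        rw [← Real.rpow_mul (mul_nonneg (hp x) (hq j x)), Real.sqrt_eq_rpow]
        congr 1
        rw [hP]; field_simp
      have hgQ : ∀ x, g x ^ Q = (∏ k ∈ univ.erase j, q k x) ^ ((1 : ℝ) / ((N : ℝ) - 1)) := by
        intro x
        show ((∏ k ∈ univ.erase j, q k x) ^ ((1 : ℝ) / ((N : ℝ) + 1))) ^ Q = _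
        rw [← Real.rpow_mul (Finset.prod_nonneg fun k _ => hq k x)]
        congr 1
        rw [hQ]; field_simp
      have hsum_g : ∑ x, g x ^ Q ≤ 1 := by
        have hcard : ((univ.erase j).card : ℝ) = (N : ℝ) - 1 := by
          rw [Finset.card_erase_of_mem (mem_univ j), card_univ, Fintype.card_fin,
            Nat.cast_sub (by omega : 1 ≤ N), Nat.cast_one]
        have step : ∀ x, g x ^ Q ≤ ∑ k ∈ univ.erase j, (1 / ((N : ℝ) - 1)) * q k x := by
          intro x
          rw [hgQ x, ← Real.finset_prod_rpow _ _ (fun k _ => hq k x) _]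
          exact Real.geom_mean_le_arith_mean_weighted _ _ _
            (fun k _ => by positivity)
            (by rw [Finset.sum_const, nsmul_eq_mul, hcard]; field_simp)
            (fun k _ => hq k x)
        calc ∑ x, g x ^ Q ≤ ∑ x, ∑ k ∈ univ.erase j, (1 / ((N : ℝ) - 1)) * q k x :=
              Finset.sum_le_sum fun x _ => step x
          _ = ∑ k ∈ univ.erase j, (1 / ((N : ℝ) - 1)) * ∑ x, q k x := by
              rw [Finset.sum_comm]
              exact Finset.sum_congr rfl fun k _ => by rw [Finset.mul_sum]
          _ = 1 := by
              rw [Finset.sum_congr rfl fun k _ => by rw [hq1 k, mul_one]]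
              rw [Finset.sum_const, nsmul_eq_mul, hcard]
              field_simp
      have hfPsum : ∑ x, f x ^ P = B := by
        rw [hB]; exact Finset.sum_congr rfl fun x _ => hfP x
      have hQ0 : (0 : ℝ) < Q := by
        rw [hQ]; exact div_pos hN1 hNm1
      have hfac2 : (∑ x, g x ^ Q) ^ ((1 : ℝ) / Q) ≤ 1 :=
        Real.rpow_le_one (Finset.sum_nonneg fun x _ =>
            Real.rpow_nonneg (Real.rpow_nonneg
              (Finset.prod_nonneg fun k _ => hq k x) _) _)
          hsum_g (by positivity)
      calc ∑ x, (p x * ∏ k, q k x) ^ ((1 : ℝ) / (N + 1))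
          = ∑ x, f x * g x := Finset.sum_congr rfl fun x _ => hfg x
        _ ≤ (∑ x, f x ^ P) ^ ((1 : ℝ) / P) * (∑ x, g x ^ Q) ^ ((1 : ℝ) / Q) := holder
        _ ≤ (∑ x, f x ^ P) ^ ((1 : ℝ) / P) * 1 := by
            apply mul_le_mul_of_nonneg_left hfac2
            exact Real.rpow_nonneg (Finset.sum_nonneg fun x _ =>
              hfP x ▸ Real.sqrt_nonneg _) _
        _ = B ^ ((2 : ℝ) / ((N : ℝ) + 1)) := by
            rw [mul_one, hfPsum]
            congr 1
            rw [hP]; field_simp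
  -- conclude by raising to (N+1)
  have hG0 : (0 : ℝ) ≤ ∑ x, (p x * ∏ k, q k x) ^ ((1 : ℝ) / (N + 1)) :=
    Finset.sum_nonneg fun x _ => Real.rpow_nonneg
      (mul_nonneg (hp x) (Finset.prod_nonneg fun k _ => hq k x)) _
  calc (∑ x, (p x * ∏ k, q k x) ^ ((1 : ℝ) / (N + 1))) ^ ((N : ℝ) + 1)
      ≤ (B ^ ((2 : ℝ) / ((N : ℝ) + 1))) ^ ((N : ℝ) + 1) :=
        Real.rpow_le_rpow hG0 key hN1.le
    _ = B ^ 2 := by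
        rw [← Real.rpow_natCast B 2, ← Real.rpow_mul hB0]
        congr 1
        field_simp
        norm_num

/-- Multi-distribution overlap inequality: for probability distributions
`p, q₁, …, q_N` on a finite set `χ`,
`N (1 - (Σ_x (p(x) ∏_k q_k(x))^{1/(N+1)})^{N+1}) ≥ Σ_k (1 - (Σ_x √(p(x)q_k(x)))²)`. -/
theorem geometric_mean_overlap_inequality
    {χ : Type*} [Fintype χ] (N : ℕ) (p : χ → ℝ) (q : Fin N → χ → ℝ)
    (hp : ∀ x, 0 ≤ p x) (hp1 : ∑ x, p x = 1)
    (hq : ∀ k x, 0 ≤ q k x) (hq1 : ∀ k, ∑ x, q k x = 1) :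
    ∑ k, (1 - (∑ x, Real.sqrt (p x * q k x)) ^ 2)
      ≤ (N : ℝ) * (1 - (∑ x, (p x * ∏ k, q k x) ^ ((1 : ℝ) / (N + 1)))
          ^ ((N : ℝ) + 1)) := by
  calc ∑ k, (1 - (∑ x, Real.sqrt (p x * q k x)) ^ 2)
      ≤ ∑ k : Fin N, (1 - (∑ x, (p x * ∏ k, q k x) ^ ((1 : ℝ) / (N + 1)))
          ^ ((N : ℝ) + 1)) :=
        Finset.sum_le_sum fun j _ => by
          have := geometric_mean_overlap_key N p q hp hq hq1 j
          linarith
    _ = (N : ℝ) * (1 - (∑ x, (p x * ∏ k, q k x) ^ ((1 : ℝ) / (N + 1)))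
          ^ ((N : ℝ) + 1)) := by
        rw [Finset.sum_const, Finset.card_univ, Fintype.card_fin, nsmul_eq_mul]
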